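/- Let k ≥ 1, let R = ⋂_{i=1}^k {x ∈ ℝⁿ : ‖x − c_i‖ ≤ r_i} with c_i ∈ ℝⁿ and r_i > 0, assume R has nonempty interior, and set D = max_{i∈[k]} r_i. Let ω_n denote the Lebesgue volume of the Euclidean unit ball in ℝⁿ. Then there exists i ∈ [k] such that for all x ∈ R, ‖x − c_i‖² ≥ r_i² − 24k²·(vol(R)/(Dⁿω_n))^{1/n}·D². -/

import Mathlib

open MeasureTheory

set_option maxHeartbeats 1600000 in
/-- Let `R = ⋂ᵢ {x : ‖x − cᵢ‖ ≤ rᵢ}` (`k ≥ 1` balls, `rᵢ > 0`) have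
nonempty interior and let `D = maxᵢ rᵢ`. With `ω_n` the volume of the unit ball in `ℝⁿ`,
there exists `i` such that every `x ∈ R` satisfies
`‖x − cᵢ‖² ≥ rᵢ² − 24k²·(vol(R)/(Dⁿω_n))^{1/n}·D²`. -/
theorem stmt12 {n k : ℕ} (hk : 1 ≤ k) (c : Fin k → EuclideanSpace ℝ (Fin n))
    (r : Fin k → ℝ) (hr : ∀ i, 0 < r i)
    (R : Set (EuclideanSpace ℝ (Fin n)))
    (hR : R = ⋂ i : Fin k, Metric.closedBall (c i) (r i))
    (hint : (interior R).Nonempty)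
    (D : ℝ) (hD : D = Finset.univ.sup' ⟨⟨0, hk⟩, Finset.mem_univ _⟩ r) :
    ∃ i : Fin k, ∀ x ∈ R,
      ‖x - c i‖ ^ 2 ≥ r i ^ 2 -
        24 * (k : ℝ) ^ 2 *
          ((volume R).toReal /
            (D ^ n * (volume (Metric.closedBall (0 : EuclideanSpace ℝ (Fin n)) 1)).toReal))
            ^ ((1 : ℝ) / n) * D ^ 2 := by
  obtain ⟨i0, -, hi0⟩ := Finset.exists_mem_eq_sup'
    (⟨⟨0, hk⟩, Finset.mem_univ _⟩ : (Finset.univ : Finset (Fin k)).Nonempty) r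
  have hDi0 : D = r i0 := hD.trans hi0
  have hDpos : 0 < D := hDi0 ▸ hr i0
  have hrD : ∀ i, r i ≤ D := fun i => hD ▸ Finset.le_sup' r (Finset.mem_univ i)
  have hk0 : ((k : ℝ)) ≠ 0 := by positivity
  have hkpos : (0:ℝ) < k := Nat.cast_pos.mpr hk
  have hk1 : (1:ℝ) ≤ k := by exact_mod_cast hk
  have hk2 : (1:ℝ) ≤ (k:ℝ)^2 := one_le_pow₀ hk1
  set ω := (volume (Metric.closedBall (0 : EuclideanSpace ℝ (Fin n)) 1)).toReal with hωdef
  rcases Nat.eq_zero_or_pos n with hn | hn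
  · subst hn
    refine ⟨i0, fun x hx => ?_⟩
    haveI : Subsingleton (EuclideanSpace ℝ (Fin 0)) :=
      ⟨fun a b => PiLp.ext fun i => Fin.elim0 i⟩
    have hx0 : x - c i0 = 0 := Subsingleton.elim _ _
    rw [hx0, norm_zero, show ((1:ℝ)/(0:ℕ)) = 0 by norm_num, Real.rpow_zero, hDi0]
    nlinarith [sq_nonneg (r i0), hk2]
  -- main case `1 ≤ n`
  have hconv : Convex ℝ R := by
    rw [hR]; exact convex_iInter fun i => convex_closedBall _ _
  have hRsub : ∀ i, R ⊆ Metric.closedBall (c i) (r i) := by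
    intro i; rw [hR]; exact Set.iInter_subset _ i
  have hωpos : 0 < ω :=
    ENNReal.toReal_pos (Metric.measure_closedBall_pos volume _ one_pos).ne' measure_closedBall_lt_top.ne
  have hVE : 0 < volume R :=
    lt_of_lt_of_le (isOpen_interior.measure_pos volume hint) (measure_mono interior_subset)
  have hVlt : volume R < ⊤ :=
    lt_of_le_of_lt (measure_mono (hRsub i0)) measure_closedBall_lt_top
  set V := (volume R).toReal with hVdef
  have hVpos : 0 < V := ENNReal.toReal_pos hVE.ne' hVlt.ne
  set t := (V / (D ^ n * ω)) ^ ((1 : ℝ) / n) with htdef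
  have htpos : 0 < t :=
    Real.rpow_pos_of_pos (div_pos hVpos (mul_pos (pow_pos hDpos n) hωpos)) _
  by_contra hcon
  push_neg at hcon
  choose x hxR hxlt using hcon
  set y := ∑ j : Fin k, (k:ℝ)⁻¹ • x j with hydef
  have hw : ∑ _j : Fin k, (k:ℝ)⁻¹ = 1 := by
    rw [Finset.sum_const, Finset.card_univ, Fintype.card_fin, nsmul_eq_mul,
      mul_inv_cancel₀ hk0]
  have hy : y ∈ R :=
    hconv.sum_mem (fun j _ => by positivity) hw (fun j _ => hxR j)
  -- norm bound for the barycenter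
  have hbound : ∀ i, ‖y - c i‖ ≤ (k:ℝ)⁻¹ * (‖x i - c i‖ + ((k:ℝ) - 1) * r i) := by
    intro i
    have hc : (c i : EuclideanSpace ℝ (Fin n)) = ∑ _j : Fin k, (k:ℝ)⁻¹ • c i := by
      rw [Finset.sum_const, Finset.card_univ, Fintype.card_fin,
        ← Nat.cast_smul_eq_nsmul ℝ, smul_smul, mul_inv_cancel₀ hk0, one_smul]
    have hyc : y - c i = ∑ j : Fin k, (k:ℝ)⁻¹ • (x j - c i) := by
      calc y - c i = ∑ j : Fin k, ((k:ℝ)⁻¹ • x j - (k:ℝ)⁻¹ • c i) := by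
            rw [Finset.sum_sub_distrib, ← hc]
        _ = ∑ j : Fin k, (k:ℝ)⁻¹ • (x j - c i) := by
            simp [smul_sub]
    rw [hyc]
    calc ‖∑ j : Fin k, (k:ℝ)⁻¹ • (x j - c i)‖
        ≤ ∑ j : Fin k, ‖(k:ℝ)⁻¹ • (x j - c i)‖ := norm_sum_le _ _
      _ = ∑ j : Fin k, (k:ℝ)⁻¹ * ‖x j - c i‖ := by
          refine Finset.sum_congr rfl fun j _ => ?_
          rw [norm_smul, Real.norm_eq_abs, abs_of_nonneg (by positivity)]
      _ = (k:ℝ)⁻¹ * ∑ j : Fin k, ‖x j - c i‖ := by rw [← Finset.mul_sum]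
      _ ≤ (k:ℝ)⁻¹ * (‖x i - c i‖ + ((k:ℝ) - 1) * r i) := by
          refine mul_le_mul_of_nonneg_left ?_ (by positivity)
          rw [← Finset.add_sum_erase _ _ (Finset.mem_univ i)]
          refine add_le_add_right ?_ _
          calc ∑ j ∈ Finset.univ.erase i, ‖x j - c i‖
              ≤ (Finset.univ.erase i).card • r i := by
                refine Finset.sum_le_card_nsmul _ _ _ fun j _ => ?_
                have := hRsub i (hxR j)
                rwa [Metric.mem_closedBall, dist_eq_norm] at this
            _ = ((k:ℝ) - 1) * r i := by
                rw [Finset.card_erase_of_mem (Finset.mem_univ i), Finset.card_univ,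
                  Fintype.card_fin, nsmul_eq_mul, Nat.cast_sub hk, Nat.cast_one]
  -- gap bound
  have hgap : ∀ i, 12 * (k:ℝ)^2 * t * D ≤ r i - ‖x i - c i‖ := by
    intro i
    have ha0 : 0 ≤ ‖x i - c i‖ := norm_nonneg _
    have haR : ‖x i - c i‖ ≤ r i := by
      have := hRsub i (hxR i)
      rwa [Metric.mem_closedBall, dist_eq_norm] at this
    have hlt := hxlt i
    nlinarith [hrD i, mul_pos htpos hDpos, hr i]
  have hkey : ∀ i, ‖y - c i‖ + 12 * (k:ℝ) * t * D ≤ r i := by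
    intro i
    have h1 := hbound i
    have h2 := hgap i
    have ha0 : (0:ℝ) ≤ ‖x i - c i‖ := norm_nonneg _
    have h3 : (k:ℝ)⁻¹ * (‖x i - c i‖ + ((k:ℝ) - 1) * r i) ≤ r i - 12 * (k:ℝ) * t * D := by
      rw [inv_mul_le_iff₀ hkpos]
      nlinarith [h2]
    linarith [h1, h3]
  set δ := 12 * (k:ℝ) * t * D with hδdef
  have hδpos : 0 < δ := by positivity
  have hsub : Metric.closedBall y δ ⊆ R := by
    rw [hR]
    refine Set.subset_iInter fun i z hz => ?_
    rw [Metric.mem_closedBall] at hz ⊢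
    calc dist z (c i) ≤ dist z y + dist y (c i) := dist_triangle _ _ _
      _ ≤ δ + ‖y - c i‖ := by rw [dist_eq_norm]; exact add_le_add_left hz _
      _ ≤ r i := by linarith [hkey i]
  -- volume comparison
  have hmeas := Measure.addHaar_closedBall' (volume : Measure (EuclideanSpace ℝ (Fin n))) y hδpos.le
  rw [finrank_euclideanSpace_fin] at hmeas
  have hle : ENNReal.ofReal (δ ^ n) * volume (Metric.closedBall (0 : EuclideanSpace ℝ (Fin n)) 1)
      ≤ volume R := by
    rw [← hmeas]; exact measure_mono hsub
  have hV : δ ^ n * ω ≤ V := by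
    have := ENNReal.toReal_mono hVlt.ne hle
    rwa [ENNReal.toReal_mul, ENNReal.toReal_ofReal (by positivity)] at this
  have htn : t ^ n = V / (D ^ n * ω) := by
    rw [htdef, ← Real.rpow_natCast ((V / (D ^ n * ω)) ^ ((1:ℝ)/n)) n,
      ← Real.rpow_mul (by positivity), one_div, inv_mul_cancel₀ (by exact_mod_cast hn.ne'),
      Real.rpow_one]
  have hVeq : V = t ^ n * (D ^ n * ω) := by
    rw [htn]; field_simp
  rw [hVeq, hδdef, mul_pow, mul_pow, mul_pow] at hV
  have h12 : (12:ℝ) ≤ 12 ^ n := le_self_pow₀ (by norm_num) hn.ne'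
  have hkn : (1:ℝ) ≤ (k:ℝ) ^ n := one_le_pow₀ hk1
  have htnpos : 0 < t ^ n := pow_pos htpos n
  have hDnpos : 0 < D ^ n := pow_pos hDpos n
  have hP : 0 < t ^ n * D ^ n * ω := mul_pos (mul_pos htnpos hDnpos) hωpos
  have h12kn : (12:ℝ) ≤ 12 ^ n * (k:ℝ) ^ n := by nlinarith [h12, hkn]
  nlinarith [hV, hP, mul_le_mul_of_nonneg_right h12kn hP.le]
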